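/- Let ε ≠ 0 and ξ be real numbers, and let x, y, x̃, ỹ be real numbers satisfying the first two equations of the discrete system dE₇: x̃ - x = -2ε x x̃ and ỹ - y = -ε ξ(ỹ x + y x̃). Assume x ≠ 0, x̃ ≠ 0, and that both ξ/2 + 1/(2εx) > 0 and 1 - ξ/2 + 1/(2εx) > 0 (so all arguments of the Gamma function below are positive, noting 1/(2εx̃) = 1/(2εx) + 1). Then the transcendental function Ĥ₇(x,y) = (y/x)·Γ(ξ/2 + 1/(2εx))/Γ(1 - ξ/2 + 1/(2εx)), where Γ is the real Gamma function, satisfies Ĥ₇(x̃, ỹ) = Ĥ₇(x, y); that is, Ĥ₇ is an integral of motion of dE₇. -/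

import Mathlib

/-- The transcendental function
`Ĥ₇(x,y) = (y/x)·Γ(ξ/2 + 1/(2εx))/Γ(1 - ξ/2 + 1/(2εx))` is an integral of
motion of the first two equations of the discrete system `dE₇`. -/
theorem dE7_H7_integral (ε ξ x y x' y' : ℝ) (hε : ε ≠ 0)
    (hx : x ≠ 0) (hx' : x' ≠ 0)
    (h1 : x' - x = -2*ε*x*x')
    (h2 : y' - y = -ε*ξ*(y'*x + y*x'))
    (hp1 : ξ/2 + 1/(2*ε*x) > 0)
    (hp2 : 1 - ξ/2 + 1/(2*ε*x) > 0) :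
    (y'/x') * Real.Gamma (ξ/2 + 1/(2*ε*x')) / Real.Gamma (1 - ξ/2 + 1/(2*ε*x')) =
      (y/x) * Real.Gamma (ξ/2 + 1/(2*ε*x)) / Real.Gamma (1 - ξ/2 + 1/(2*ε*x)) := by
  have hd : (2*ε*x) ≠ 0 := by
    simp [hε, hx]
  have hd' : (2*ε*x') ≠ 0 := by
    simp [hε, hx']
  have hkey : 1/(2*ε*x') = 1/(2*ε*x) + 1 := by
    rw [div_add' _ _ _ hd, div_eq_div_iff hd' hd]
    linear_combination (-2*ε)*h1
  have hA' : ξ/2 + 1/(2*ε*x') = (ξ/2 + 1/(2*ε*x)) + 1 := by rw [hkey]; ring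
  have hB' : 1 - ξ/2 + 1/(2*ε*x') = (1 - ξ/2 + 1/(2*ε*x)) + 1 := by rw [hkey]; ring
  rw [hA', hB', Real.Gamma_add_one (ne_of_gt hp1), Real.Gamma_add_one (ne_of_gt hp2)]
  have hGAne : Real.Gamma (ξ/2 + 1/(2*ε*x)) ≠ 0 := ne_of_gt (Real.Gamma_pos_of_pos hp1)
  have hGBne : Real.Gamma (1 - ξ/2 + 1/(2*ε*x)) ≠ 0 := ne_of_gt (Real.Gamma_pos_of_pos hp2)
  have hBne : 1 - ξ/2 + 1/(2*ε*x) ≠ 0 := ne_of_gt hp2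
  -- the fraction-free core identity
  have hnum : y'*x*(ξ*ε*x+1) = y*x'*(2*ε*x - ξ*ε*x + 1) := by
    linear_combination x*h2 - y*h1
  have hcore : y' * x * (ξ/2 + 1/(2*ε*x)) = y * x' * (1 - ξ/2 + 1/(2*ε*x)) := by
    have e1 : ξ/2 + 1/(2*ε*x) = (ξ*ε*x+1)/(2*ε*x) := by
      field_simp
    have e2 : 1 - ξ/2 + 1/(2*ε*x) = (2*ε*x - ξ*ε*x+1)/(2*ε*x) := by
      field_simp
    rw [e1, e2, ← mul_div_assoc, ← mul_div_assoc, hnum]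
  -- abstract away the Gamma values and the arguments
  generalize hGA : Real.Gamma (ξ/2 + 1/(2*ε*x)) = GA at *
  generalize hGB : Real.Gamma (1 - ξ/2 + 1/(2*ε*x)) = GB at *
  generalize hA : ξ/2 + 1/(2*ε*x) = A at *
  generalize hB : 1 - ξ/2 + 1/(2*ε*x) = B at *
  field_simp
  linear_combination hcore
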